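/- Let Λ₁, Λ₂ be almost conjugate subgroups of a finite group Γ, let n ∈ ℕ and γ₁,…,γₙ ∈ Γ. Then there exists a bijection ρ : F(Λ₁, γ₁⋯γₙ) → F(Λ₂, γ₁⋯γₙ) such that for every p dividing n with the property that γᵢ = γⱼ whenever i ≡ j (mod n/p), a coset C ∈ F(Λ₁, γ₁⋯γₙ) lies in F(Λ₁, γ₁⋯γ_{n/p}) if and only if ρ(C) lies in F(Λ₂, γ₁⋯γ_{n/p}). -/

import Mathlib

set_option linter.unusedSectionVars false
set_option maxHeartbeats 1000000

/-- The right coset Λδ of a subgroup Λ. -/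
def rcoset {Γ : Type*} [Group Γ] (Λ : Subgroup Γ) (δ : Γ) : Set Γ :=
  {x | ∃ l ∈ Λ, x = l * δ}

/-- F(Λ,γ) = {Λδ : δ ∈ Γ, Λδγ = Λδ}, a set of right cosets of Λ. -/
def Fset {Γ : Type*} [Group Γ] (Λ : Subgroup Γ) (γ : Γ) : Set (Set Γ) :=
  {s | ∃ δ : Γ, s = rcoset Λ δ ∧ rcoset Λ (δ * γ) = rcoset Λ δ}

/-- Two subgroups are almost conjugate if every conjugacy class meets them
in the same number of elements. -/
def AlmostConj {G : Type*} [Group G] (H₁ H₂ : Subgroup G) : Prop :=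
  ∀ g : G, Nat.card {x : G | IsConj g x ∧ x ∈ H₁} =
    Nat.card {x : G | IsConj g x ∧ x ∈ H₂}

/-- The product γ₁⋯γ_k of the first k of the elements γ₁,…,γₙ. -/
def partialProd {Γ : Type*} [Group Γ] {n : ℕ} (γ : Fin n → Γ) (k : ℕ)
    (hk : k ≤ n) : Γ :=
  (List.ofFn fun i : Fin k => γ (Fin.castLE hk i)).prod

section basic
variable {Γ : Type*} [Group Γ] (Λ : Subgroup Γ)

lemma mem_rcoset {x δ : Γ} : x ∈ rcoset Λ δ ↔ x * δ⁻¹ ∈ Λ := by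
  constructor
  · rintro ⟨l, hl, rfl⟩; simpa using hl
  · intro h; exact ⟨x * δ⁻¹, h, by group⟩

lemma rcoset_eq_iff {a b : Γ} : rcoset Λ a = rcoset Λ b ↔ a * b⁻¹ ∈ Λ := by
  constructor
  · intro h
    have : a ∈ rcoset Λ b := h ▸ ⟨1, Λ.one_mem, by group⟩
    exact (mem_rcoset Λ).mp this
  · intro h
    ext x
    simp only [mem_rcoset]
    constructor
    · intro hx
      have := Λ.mul_mem hx h
      simpa [mul_assoc] using this
    · intro hx
      have := Λ.mul_mem hx (Λ.inv_mem h)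
      have h2 : x * b⁻¹ * (a * b⁻¹)⁻¹ = x * a⁻¹ := by group
      rwa [h2] at this

lemma rcoset_mem_Fset_iff {δ g : Γ} : rcoset Λ δ ∈ Fset Λ g ↔ δ * g * δ⁻¹ ∈ Λ := by
  constructor
  · rintro ⟨δ', hδ', hfix⟩
    have h1 : δ * δ'⁻¹ ∈ Λ := (rcoset_eq_iff Λ).mp hδ'
    have h2 : δ' * g * δ'⁻¹ ∈ Λ := by
      have := (rcoset_eq_iff Λ).mp hfix
      simpa [mul_assoc] using this
    have := Λ.mul_mem (Λ.mul_mem h1 h2) (Λ.inv_mem h1)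
    have he : δ * δ'⁻¹ * (δ' * g * δ'⁻¹) * (δ * δ'⁻¹)⁻¹ = δ * g * δ⁻¹ := by group
    rwa [he] at this
  · intro h
    refine ⟨δ, rfl, (rcoset_eq_iff Λ).mpr ?_⟩
    simpa [mul_assoc] using h

lemma mem_Fset_elim {s : Set Γ} {g : Γ} (hs : s ∈ Fset Λ g) :
    ∃ δ : Γ, s = rcoset Λ δ ∧ δ * g * δ⁻¹ ∈ Λ := by
  obtain ⟨δ, hδ, hfix⟩ := hs
  refine ⟨δ, hδ, ?_⟩
  have := (rcoset_eq_iff Λ).mp hfix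
  simpa [mul_assoc] using this

lemma mem_Fset_pow {s : Set Γ} {g : Γ} (hs : s ∈ Fset Λ g) (k : ℕ) :
    s ∈ Fset Λ (g ^ k) := by
  obtain ⟨δ, rfl, hδ⟩ := mem_Fset_elim Λ hs
  refine (rcoset_mem_Fset_iff Λ).mpr ?_
  have : δ * g ^ k * δ⁻¹ = (δ * g * δ⁻¹) ^ k := (conj_pow).symm
  rw [this]; exact Λ.pow_mem hδ k

lemma pow_gcd_mem {x : Γ} {a b : ℕ} (ha : x ^ a ∈ Λ) (hb : x ^ b ∈ Λ) :
    x ^ Nat.gcd a b ∈ Λ := by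
  have key : x ^ (Nat.gcd a b : ℤ) ∈ Λ := by
    rw [Nat.gcd_eq_gcd_ab a b]
    rw [zpow_add, zpow_mul, zpow_mul]
    have ha' : (x ^ (a:ℤ)) ∈ Λ := by rw [zpow_natCast]; exact ha
    have hb' : (x ^ (b:ℤ)) ∈ Λ := by rw [zpow_natCast]; exact hb
    exact Λ.mul_mem (Λ.zpow_mem ha' _) (Λ.zpow_mem hb' _)
  rwa [zpow_natCast] at key

end basic

section counting
variable {Γ : Type*} [Group Γ] [Finite Γ] (Λ : Subgroup Γ)

open Function

noncomputable local instance (priority := 10000) : Fintype Γ := Fintype.ofFinite Γ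

lemma card_N_eq_Fset (g : Γ) :
    Nat.card {δ : Γ // δ * g * δ⁻¹ ∈ Λ} = Nat.card (Fset Λ g) * Nat.card Λ := by
  classical
  -- choose representative for each coset in Fset Λ g
  have hrep : ∀ C : Fset Λ g, ∃ δ : Γ, (C : Set Γ) = rcoset Λ δ ∧ δ * g * δ⁻¹ ∈ Λ :=
    fun C => mem_Fset_elim Λ C.2
  choose rep hrep1 hrep2 using hrep
  have : Nonempty ((Fset Λ g) × Λ ≃ {δ : Γ // δ * g * δ⁻¹ ∈ Λ}) := by
    refine ⟨Equiv.ofBijective (fun p => ⟨(p.2 : Γ) * rep p.1, ?_⟩) ⟨?_, ?_⟩⟩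
    · have he : (p.2 : Γ) * rep p.1 * g * ((p.2:Γ) * rep p.1)⁻¹
          = (p.2:Γ) * (rep p.1 * g * (rep p.1)⁻¹) * (p.2:Γ)⁻¹ := by group
      rw [he]
      exact Λ.mul_mem (Λ.mul_mem p.2.2 (hrep2 p.1)) (Λ.inv_mem p.2.2)
    · rintro ⟨C, l⟩ ⟨C', l'⟩ hEq
      have hv : (l : Γ) * rep C = (l' : Γ) * rep C' := congrArg Subtype.val hEq
      have hcos : rcoset Λ (rep C) = rcoset Λ (rep C') := by
        apply (rcoset_eq_iff Λ).mpr
        have : rep C = (l : Γ)⁻¹ * ((l':Γ) * rep C') := by rw [← hv]; group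
        rw [this]
        have he : (l:Γ)⁻¹ * ((l':Γ) * rep C') * (rep C')⁻¹ = (l:Γ)⁻¹ * (l':Γ) := by group
        rw [he]
        exact Λ.mul_mem (Λ.inv_mem l.2) l'.2
      have hC : C = C' := by
        apply Subtype.ext
        rw [hrep1 C, hrep1 C', hcos]
      subst hC
      have : (l : Γ) = l' := by
        have := mul_right_cancel hv; exact this
      simp [Prod.ext_iff, Subtype.ext this]
    · rintro ⟨δ, hδ⟩
      have hC : rcoset Λ δ ∈ Fset Λ g := (rcoset_mem_Fset_iff Λ).mpr hδ
      set C : Fset Λ g := ⟨rcoset Λ δ, hC⟩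
      have hcos : rcoset Λ δ = rcoset Λ (rep C) := hrep1 C
      have hl : δ * (rep C)⁻¹ ∈ Λ := (rcoset_eq_iff Λ).mp hcos
      refine ⟨⟨C, ⟨δ * (rep C)⁻¹, hl⟩⟩, ?_⟩
      apply Subtype.ext
      show δ * (rep C)⁻¹ * rep C = δ
      group
  obtain ⟨e⟩ := this
  rw [← Nat.card_eq_of_bijective e e.bijective, Nat.card_prod]

end counting

section counting2
variable {Γ : Type*} [Group Γ] [Finite Γ] (Λ : Subgroup Γ)

lemma card_N_eq_conj (g : Γ) :
    Nat.card {δ : Γ // δ * g * δ⁻¹ ∈ Λ} =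
      Nat.card {x : Γ | IsConj g x ∧ x ∈ Λ} * Nat.card (Subgroup.centralizer {g}) := by
  classical
  have hrep : ∀ x : {x : Γ | IsConj g x ∧ x ∈ Λ}, ∃ c : Γ, c * g * c⁻¹ = (x : Γ) := by
    rintro ⟨x, hx, -⟩
    obtain ⟨c, hc⟩ := isConj_iff.mp hx
    exact ⟨c, hc⟩
  choose rep hrep1 using hrep
  have : Nonempty ({x : Γ | IsConj g x ∧ x ∈ Λ} × Subgroup.centralizer {g} ≃
      {δ : Γ // δ * g * δ⁻¹ ∈ Λ}) := by
    have hcent : ∀ z : Subgroup.centralizer ({g} : Set Γ), (z : Γ) * g * (z:Γ)⁻¹ = g := by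
      rintro ⟨z, hz⟩
      have := hz g (Set.mem_singleton g)
      show z * g * z⁻¹ = g
      rw [← this]; group
    refine ⟨Equiv.ofBijective (fun p => ⟨rep p.1 * (p.2 : Γ), ?_⟩) ⟨?_, ?_⟩⟩
    · have he : rep p.1 * (p.2:Γ) * g * (rep p.1 * (p.2:Γ))⁻¹
          = rep p.1 * ((p.2:Γ) * g * (p.2:Γ)⁻¹) * (rep p.1)⁻¹ := by group
      rw [he, hcent p.2, hrep1 p.1]
      exact p.1.2.2
    · rintro ⟨x, z⟩ ⟨x', z'⟩ hEq
      have hv : rep x * (z : Γ) = rep x' * (z' : Γ) := congrArg Subtype.val hEq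
      have hx : x = x' := by
        apply Subtype.ext
        have e1 : (x : Γ) = (rep x * (z:Γ)) * g * (rep x * (z:Γ))⁻¹ := by
          have he : rep x * (z:Γ) * g * (rep x * (z:Γ))⁻¹
            = rep x * ((z:Γ) * g * (z:Γ)⁻¹) * (rep x)⁻¹ := by group
          rw [he, hcent z, hrep1 x]
        have e2 : (x' : Γ) = (rep x' * (z':Γ)) * g * (rep x' * (z':Γ))⁻¹ := by
          have he : rep x' * (z':Γ) * g * (rep x' * (z':Γ))⁻¹
            = rep x' * ((z':Γ) * g * (z':Γ)⁻¹) * (rep x')⁻¹ := by group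
          rw [he, hcent z', hrep1 x']
        rw [e1, e2, hv]
      subst hx
      have : (z : Γ) = z' := mul_left_cancel hv
      simp [Prod.ext_iff, Subtype.ext this]
    · rintro ⟨δ, hδ⟩
      have hx : (δ * g * δ⁻¹) ∈ {x : Γ | IsConj g x ∧ x ∈ Λ} := by
        exact ⟨isConj_iff.mpr ⟨δ, rfl⟩, hδ⟩
      set x : {x : Γ | IsConj g x ∧ x ∈ Λ} := ⟨δ * g * δ⁻¹, hx⟩
      have hz : ((rep x)⁻¹ * δ) ∈ Subgroup.centralizer ({g} : Set Γ) := by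
        refine Subgroup.mem_centralizer_iff.mpr ?_
        rintro y ⟨rfl⟩
        have h1 : rep x * g * (rep x)⁻¹ = δ * g * δ⁻¹ := hrep1 x
        have : g * ((rep x)⁻¹ * δ) = ((rep x)⁻¹ * δ) * g := by
          have := congrArg (fun w => (rep x)⁻¹ * w * δ) h1
          calc g * ((rep x)⁻¹ * δ) = (rep x)⁻¹ * (rep x * g * (rep x)⁻¹) * δ := by group
          _ = (rep x)⁻¹ * (δ * g * δ⁻¹) * δ := by rw [h1]
          _ = ((rep x)⁻¹ * δ) * g := by group
        exact this
      refine ⟨⟨x, ⟨(rep x)⁻¹ * δ, hz⟩⟩, ?_⟩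
      apply Subtype.ext
      show rep x * ((rep x)⁻¹ * δ) = δ
      group
  obtain ⟨e⟩ := this
  rw [← Nat.card_eq_of_bijective e e.bijective, Nat.card_prod]

end counting2

section counting3
variable {Γ : Type*} [Group Γ] [Finite Γ]

lemma card_subgroup_eq (Λ₁ Λ₂ : Subgroup Γ) (h : AlmostConj Λ₁ Λ₂) :
    Nat.card Λ₁ = Nat.card Λ₂ := by
  classical
  letI : Fintype Γ := Fintype.ofFinite Γ
  have key : ∀ Λ : Subgroup Γ,
      (Finset.univ.filter (fun x : Γ => x ∈ Λ)).card =
      ∑ q ∈ (Finset.univ : Finset (ConjClasses Γ)),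
        ((Finset.univ.filter (fun x : Γ => x ∈ Λ)).filter
          (fun x => ConjClasses.mk x = q)).card := by
    intro Λ
    exact Finset.card_eq_sum_card_fiberwise (fun x _ => Finset.mem_univ _)
  have fib : ∀ (Λ : Subgroup Γ) (g : Γ),
      ((Finset.univ.filter (fun x : Γ => x ∈ Λ)).filter
          (fun x => ConjClasses.mk x = ConjClasses.mk g)).card =
      Nat.card {x : Γ | IsConj g x ∧ x ∈ Λ} := by
    intro Λ g
    rw [Nat.card_eq_fintype_card]
    rw [Fintype.card_subtype]
    congr 1
    ext x
    simp only [Finset.mem_filter, Finset.mem_univ, true_and, Set.mem_setOf_eq]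
    rw [ConjClasses.mk_eq_mk_iff_isConj]
    constructor
    · rintro ⟨h1, h2⟩; exact ⟨h2.symm, h1⟩
    · rintro ⟨h1, h2⟩; exact ⟨h2, h1.symm⟩
  have hcard : ∀ Λ : Subgroup Γ,
      Nat.card Λ = (Finset.univ.filter (fun x : Γ => x ∈ Λ)).card := by
    intro Λ
    rw [Nat.card_eq_fintype_card]
    rw [← Fintype.card_subtype]
  rw [hcard Λ₁, hcard Λ₂, key Λ₁, key Λ₂]
  apply Finset.sum_congr rfl
  intro q _
  obtain ⟨g, rfl⟩ := ConjClasses.mk_surjective q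
  rw [fib Λ₁ g, fib Λ₂ g]
  exact h g

lemma card_Fset_eq (Λ₁ Λ₂ : Subgroup Γ) (h : AlmostConj Λ₁ Λ₂) (g : Γ) :
    Nat.card (Fset Λ₁ g) = Nat.card (Fset Λ₂ g) := by
  have e1 := card_N_eq_Fset Λ₁ g
  have e2 := card_N_eq_Fset Λ₂ g
  have e3 := card_N_eq_conj Λ₁ g
  have e4 := card_N_eq_conj Λ₂ g
  have hΛ : Nat.card Λ₁ = Nat.card Λ₂ := card_subgroup_eq Λ₁ Λ₂ h
  have hmul : Nat.card (Fset Λ₁ g) * Nat.card Λ₂ = Nat.card (Fset Λ₂ g) * Nat.card Λ₂ :=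
    calc Nat.card (Fset Λ₁ g) * Nat.card Λ₂ = Nat.card (Fset Λ₁ g) * Nat.card Λ₁ := by rw [hΛ]
    _ = Nat.card {x : Γ | IsConj g x ∧ x ∈ Λ₁} * Nat.card (Subgroup.centralizer {g}) := by
        rw [← e1, e3]
    _ = Nat.card {x : Γ | IsConj g x ∧ x ∈ Λ₂} * Nat.card (Subgroup.centralizer {g}) := by
        rw [h g]
    _ = Nat.card (Fset Λ₂ g) * Nat.card Λ₂ := by rw [← e4, e2]
  have hpos : 0 < Nat.card Λ₂ := Nat.card_pos
  exact Nat.eq_of_mul_eq_mul_right hpos hmul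

end counting3

section pp
variable {Γ : Type*} [Group Γ] {n : ℕ} (γ : Fin n → Γ)

lemma partialProd_congr {k k' : ℕ} (h : k = k') (hk : k ≤ n) (hk' : k' ≤ n) :
    partialProd γ k hk = partialProd γ k' hk' := by subst h; rfl

lemma partialProd_zero (h : 0 ≤ n) : partialProd γ 0 h = 1 := rfl

lemma partialProd_add {a b : ℕ} (hab : a + b ≤ n) :
    partialProd γ (a + b) hab =
      partialProd γ a (le_trans (Nat.le_add_right a b) hab) *
        (List.ofFn fun i : Fin b => γ ⟨a + (i : ℕ), by omega⟩).prod := by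
  unfold partialProd
  rw [show (fun i : Fin (a+b) => γ (Fin.castLE hab i)) =
      (fun i : Fin (a+b) => γ (Fin.castLE hab i)) from rfl]
  rw [List.ofFn_add, List.prod_append]
  congr 1

/-- If `γ` is periodic mod `d` then the product of the first `k` terms
is the `k/d`-th power of the product of the first `d` terms. -/
lemma partialProd_pow {d k : ℕ} (hd : d ≤ n) (hk : k ≤ n) (hdk : d ∣ k)
    (hper : ∀ i j : Fin n, (i : ℕ) % d = (j : ℕ) % d → γ i = γ j) :
    partialProd γ k hk = (partialProd γ d hd) ^ (k / d) := by
  rcases Nat.eq_zero_or_pos d with rfl | hdpos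
  · obtain rfl : k = 0 := by simpa using hdk
    simp [partialProd_zero]
  obtain ⟨t, rfl⟩ := hdk
  rw [Nat.mul_div_cancel_left t hdpos]
  induction t with
  | zero => simp [partialProd_zero]
  | succ t ih =>
    have h1 : d * t ≤ n := le_trans (by nlinarith) hk
    have e : d * (t + 1) = d * t + d := by ring
    rw [partialProd_congr γ e hk (by omega)]
    rw [partialProd_add γ (by omega)]
    rw [ih (by omega)]
    have hblock : (List.ofFn fun i : Fin d => γ ⟨d * t + (i : ℕ), by omega⟩) =
        List.ofFn fun i : Fin d => γ (Fin.castLE hd i) := by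
      congr 1
      funext i
      apply hper
      show (d * t + (i : ℕ)) % d = ((Fin.castLE hd i : Fin n) : ℕ) % d
      simp [Nat.add_mul_mod_self_left, Nat.mul_add_mod]
    rw [hblock]
    rw [pow_succ]
    rfl

end pp

section per
variable {Γ : Type*} [Group Γ] {n : ℕ} (γ : Fin n → Γ)

/-- The periodic predicate. -/
def IsPer (γ : Fin n → Γ) (m : ℕ) : Prop :=
  ∀ i j : Fin n, (i : ℕ) % m = (j : ℕ) % m → γ i = γ j

variable (hn : 0 < n)

/-- Auxiliary: `γ` read modulo `n`. -/
private def gm (hn : 0 < n) (γ : Fin n → Γ) (t : ℕ) : Γ := γ ⟨t % n, Nat.mod_lt t hn⟩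

lemma gm_shift {m : ℕ} (hm : m ∣ n) (hper : IsPer γ m) (t : ℕ) :
    gm hn γ (t + m) = gm hn γ t := by
  apply hper
  show ((t + m) % n) % m = (t % n) % m
  rw [Nat.mod_mod_of_dvd _ hm, Nat.mod_mod_of_dvd _ hm, Nat.add_mod_right]

lemma gm_shift_mul {m : ℕ} (hm : m ∣ n) (hper : IsPer γ m) (a t : ℕ) :
    gm hn γ (t + a * m) = gm hn γ t := by
  induction a with
  | zero => simp
  | succ a ih =>
    have : t + (a + 1) * m = (t + a * m) + m := by ring
    rw [this, gm_shift γ hn hm hper, ih]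

/-- gcd of two periods (both dividing n) is a period. -/
lemma isPer_gcd (hn : 0 < n) {m m' : ℕ} (hm : m ∣ n) (hm' : m' ∣ n)
    (hp : IsPer γ m) (hp' : IsPer γ m') : IsPer γ (Nat.gcd m m') := by
  have hmpos : 0 < m := Nat.pos_of_dvd_of_pos hm hn
  have hm'pos : 0 < m' := Nat.pos_of_dvd_of_pos hm' hn
  set d := Nat.gcd m m' with hd
  -- Bezout in ℕ: ∃ a b, a * m = d + b * m'
  obtain ⟨a, b, hab⟩ : ∃ a b : ℕ, a * m = d + b * m' := by
    have hz := Nat.gcd_eq_gcd_ab m m'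
    -- (d : ℤ) = m * u + m' * v
    set u := Nat.gcdA m m'
    set v := Nat.gcdB m m'
    -- pick N large enough
    obtain ⟨N, hN1, hN2⟩ : ∃ N : ℕ, 0 ≤ u + N * m' ∧ v - N * m ≤ 0 := by
      refine ⟨(u.natAbs + v.natAbs + 1), ?_, ?_⟩ <;>
        · push_cast
          nlinarith [Int.natCast_natAbs u, Int.natCast_natAbs v, le_abs_self u, le_abs_self v, neg_abs_le u, neg_abs_le v,
            abs_nonneg u, abs_nonneg v,
            (by exact_mod_cast hmpos : (0:ℤ) < (m:ℤ)), (by exact_mod_cast hm'pos : (0:ℤ) < (m':ℤ))]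
    refine ⟨(u + N * m').toNat, (N * m - v).toNat, ?_⟩
    have h1 : ((u + N * m').toNat : ℤ) = u + N * m' := Int.toNat_of_nonneg hN1
    have h2 : ((N * m - v).toNat : ℤ) = N * m - v := Int.toNat_of_nonneg (by linarith)
    have : ((u + N * m') * m : ℤ) = d + (N * m - v) * m' := by
      have : (d : ℤ) = m * u + m' * v := hz
      ring_nf
      ring_nf at this
      linarith
    exact_mod_cast (by rw [h1, h2]; exact this : (((u + N * m').toNat : ℤ) * m = d + ((N * m - v).toNat) * m'))
  -- step of size d
  have hstep : ∀ t : ℕ, gm hn γ (t + d) = gm hn γ t := by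
    intro t
    have e1 : gm hn γ (t + d + b * m') = gm hn γ (t + d) := gm_shift_mul γ hn hm' hp' b _
    have e2 : t + d + b * m' = t + a * m := by omega
    have e3 : gm hn γ (t + a * m) = gm hn γ t := gm_shift_mul γ hn hm hp a t
    rw [← e1, e2, e3]
  have hstep_mul : ∀ c t : ℕ, gm hn γ (t + c * d) = gm hn γ t := by
    intro c
    induction c with
    | zero => simp
    | succ c ih =>
      intro t
      have : t + (c + 1) * d = (t + c * d) + d := by ring
      rw [this, hstep, ih]
  -- conclude
  intro i j hij
  have hdpos : 0 < d := Nat.gcd_pos_of_pos_left m' hmpos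
  have hdn : d ∣ n := Nat.dvd_trans (Nat.gcd_dvd_left m m') hm
  -- s := j + n - i is divisible by d
  have hle : (i : ℕ) ≤ (j : ℕ) + n := by omega
  have hnd0 : n % d = 0 := Nat.dvd_iff_mod_eq_zero.mp hdn
  have hmodeq : (i : ℕ) ≡ (j : ℕ) + n [MOD d] := by
    show (i : ℕ) % d = ((j : ℕ) + n) % d
    rw [Nat.add_mod, hnd0, Nat.add_zero, Nat.mod_mod_of_dvd]
    · exact hij
    · exact dvd_refl d
  obtain ⟨c, hc⟩ : d ∣ (j : ℕ) + n - (i : ℕ) := (Nat.modEq_iff_dvd' hle).mp hmodeq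
  have key : gm hn γ ((i : ℕ) + c * d) = gm hn γ (i : ℕ) := hstep_mul c (i : ℕ)
  have e : (i : ℕ) + c * d = (j : ℕ) + n := by
    have hcd : c * d = d * c := Nat.mul_comm c d
    omega
  have gi : gm hn γ (i : ℕ) = γ i := by
    unfold gm
    congr 1
    exact Fin.ext (Nat.mod_eq_of_lt i.isLt)
  have gj : gm hn γ ((j : ℕ) + n) = γ j := by
    unfold gm
    congr 1
    apply Fin.ext
    show ((j : ℕ) + n) % n = (j : ℕ)
    rw [Nat.add_mod_right]
    exact Nat.mod_eq_of_lt j.isLt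
  rw [← gi, ← key, e, gj]

end per

section comb
variable {α β : Type*} [Finite α] [Finite β]

/-- Glue fiberwise bijections. -/
lemma glue_bijection (f : α → ℕ) (g : β → ℕ)
    (h : ∀ e, Nat.card {a // f a = e} = Nat.card {b // g b = e}) :
    ∃ ρ : α → β, Function.Bijective ρ ∧ ∀ a, g (ρ a) = f a := by
  have hE : ∀ e, Nonempty ({a // f a = e} ≃ {b // g b = e}) := by
    intro e
    exact Finite.card_eq.mp (h e)
  let E := fun e => Classical.choice (hE e)
  let ρ₀ : α ≃ β :=
    ((Equiv.sigmaFiberEquiv f).symm.trans (Equiv.sigmaCongrRight E)).trans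
      (Equiv.sigmaFiberEquiv g)
  refine ⟨ρ₀, ρ₀.bijective, fun a => ?_⟩
  exact (E (f a) ⟨a, rfl⟩).2

end comb

section comb2

private lemma split_aux {σ : Type*} [Fintype σ] {e : ℕ} (hepos : 0 < e)
    (F : σ → ℕ) (D : Finset ℕ) (hF : ∀ x, F x ∈ D) :
    (Finset.univ.filter (fun x => F x ∣ e)).card
      = ∑ e' ∈ e.divisors, (Finset.univ.filter (fun x => F x = e')).card := by
  classical
  rw [Finset.card_eq_sum_card_fiberwise
    (f := F) (t := e.divisors)
    (fun x hx => Nat.mem_divisors.mpr ⟨(Finset.mem_filter.mp hx).2, hepos.ne'⟩)]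
  apply Finset.sum_congr rfl
  intro e' he'
  congr 1
  rw [Finset.filter_filter]
  apply Finset.filter_congr
  intro x _
  constructor
  · rintro ⟨-, h2⟩; exact h2
  · rintro h2; exact ⟨h2 ▸ (Nat.mem_divisors.mp he').1, h2⟩

variable {α β : Type*} [Finite α] [Finite β]

/-- If the "divisor down-sets" have equal cardinalities, so do the exact fibers. -/
lemma fiber_card_eq (f : α → ℕ) (g : β → ℕ) (D : Finset ℕ)
    (hDpos : ∀ e ∈ D, 0 < e)
    (hf : ∀ a, f a ∈ D) (hg : ∀ b, g b ∈ D)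
    (hdown : ∀ e ∈ D, Nat.card {a // f a ∣ e} = Nat.card {b // g b ∣ e}) :
    ∀ e, Nat.card {a // f a = e} = Nat.card {b // g b = e} := by
  classical
  letI : Fintype α := Fintype.ofFinite α
  letI : Fintype β := Fintype.ofFinite β
  have cardeq : ∀ (P : α → Prop) [DecidablePred P],
      Nat.card {a // P a} = (Finset.univ.filter P).card := by
    intro P _
    rw [Nat.card_eq_fintype_card, Fintype.card_subtype]
  have cardeq' : ∀ (P : β → Prop) [DecidablePred P],
      Nat.card {b // P b} = (Finset.univ.filter P).card := by
    intro P _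
    rw [Nat.card_eq_fintype_card, Fintype.card_subtype]
  intro e
  induction e using Nat.strong_induction_on with
  | _ e ih =>
    by_cases heD : e ∈ D
    · have hepos : 0 < e := hDpos e heD
      have hsum1 :
          (Finset.univ.filter (fun a => f a ∣ e)).card
            = ∑ e' ∈ e.divisors, (Finset.univ.filter (fun a => f a = e')).card :=
        split_aux hepos f D hf
      have hsum2 :
          (Finset.univ.filter (fun b => g b ∣ e)).card
            = ∑ e' ∈ e.divisors, (Finset.univ.filter (fun b => g b = e')).card :=
        split_aux hepos g D hg
      have hdowne : (Finset.univ.filter (fun a => f a ∣ e)).card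
          = (Finset.univ.filter (fun b => g b ∣ e)).card := by
        rw [← cardeq _, ← cardeq' _]
        exact hdown e heD
      rw [hsum1, hsum2] at hdowne
      rw [← Nat.insert_self_properDivisors hepos.ne', Finset.sum_insert
        Nat.self_notMem_properDivisors, Finset.sum_insert Nat.self_notMem_properDivisors]
        at hdowne
      have hrest : ∑ e' ∈ e.properDivisors, (Finset.univ.filter (fun a => f a = e')).card
          = ∑ e' ∈ e.properDivisors, (Finset.univ.filter (fun b => g b = e')).card := by
        apply Finset.sum_congr rfl
        intro e' he'
        have hlt : e' < e := (Nat.mem_properDivisors.mp he').2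
        have := ih e' hlt
        rw [cardeq _, cardeq' _] at this
        exact this
      rw [hrest] at hdowne
      have : (Finset.univ.filter (fun a => f a = e)).card
          = (Finset.univ.filter (fun b => g b = e)).card := by omega
      rw [cardeq _, cardeq' _]
      exact this
    · have h1 : IsEmpty {a // f a = e} := ⟨fun ⟨a, ha⟩ => heD (ha ▸ hf a)⟩
      have h2 : IsEmpty {b // g b = e} := ⟨fun ⟨b, hb⟩ => heD (hb ▸ hg b)⟩
      rw [Nat.card_of_isEmpty, Nat.card_of_isEmpty]

end comb2

section minper
variable {Γ : Type*} [Group Γ] {n : ℕ}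

def PerSet (Λ : Subgroup Γ) (γ : Fin n → Γ) (C : Set Γ) : Set ℕ :=
  {m | m ∣ n ∧ IsPer γ m ∧ ∃ h : m ≤ n, C ∈ Fset Λ (partialProd γ m h)}

noncomputable def minPer (Λ : Subgroup Γ) (γ : Fin n → Γ) (C : Set Γ) : ℕ :=
  sInf (PerSet Λ γ C)

lemma isPer_n (γ : Fin n → Γ) : IsPer γ n := by
  intro i j hij
  congr 1
  apply Fin.ext
  rwa [Nat.mod_eq_of_lt i.isLt, Nat.mod_eq_of_lt j.isLt] at hij

lemma n_mem_PerSet (Λ : Subgroup Γ) (γ : Fin n → Γ) {C : Set Γ}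
    (hC : C ∈ Fset Λ (partialProd γ n le_rfl)) : n ∈ PerSet Λ γ C :=
  ⟨dvd_rfl, isPer_n γ, le_rfl, hC⟩

lemma minPer_mem (Λ : Subgroup Γ) (γ : Fin n → Γ) {C : Set Γ}
    (hC : C ∈ Fset Λ (partialProd γ n le_rfl)) : minPer Λ γ C ∈ PerSet Λ γ C :=
  Nat.sInf_mem ⟨n, n_mem_PerSet Λ γ hC⟩

lemma minPer_key (Λ : Subgroup Γ) (γ : Fin n → Γ) (hn : 0 < n) {C : Set Γ}
    (hC : C ∈ Fset Λ (partialProd γ n le_rfl)) {m : ℕ} (hmn : m ∣ n) (hper : IsPer γ m)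
    (hm : m ≤ n) :
    C ∈ Fset Λ (partialProd γ m hm) ↔ minPer Λ γ C ∣ m := by
  obtain ⟨hdn, hdper, hdle, hdC⟩ := minPer_mem Λ γ hC
  set d := minPer Λ γ C with hd
  have hdpos : 0 < d := Nat.pos_of_dvd_of_pos hdn hn
  constructor
  · intro hCm
    set d' := Nat.gcd d m with hd'
    have hd'per : IsPer γ d' := isPer_gcd γ hn hdn hmn hdper hper
    have hd'n : d' ∣ n := dvd_trans (Nat.gcd_dvd_left d m) hdn
    have hd'pos : 0 < d' := Nat.gcd_pos_of_pos_left m hdpos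
    have hd'le : d' ≤ n := Nat.le_of_dvd hn hd'n
    obtain ⟨δ, rfl, hδ⟩ := mem_Fset_elim Λ hdC
    have hδm : δ * partialProd γ m hm * δ⁻¹ ∈ Λ := (rcoset_mem_Fset_iff Λ).mp hCm
    have em : partialProd γ m hm = (partialProd γ d' hd'le) ^ (m / d') :=
      partialProd_pow γ hd'le hm (Nat.gcd_dvd_right d m) hd'per
    have ed : partialProd γ d hdle = (partialProd γ d' hd'le) ^ (d / d') :=
      partialProd_pow γ hd'le hdle (Nat.gcd_dvd_left d m) hd'per
    set x := δ * partialProd γ d' hd'le * δ⁻¹ with hx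
    have hconj : ∀ k : ℕ, δ * (partialProd γ d' hd'le) ^ k * δ⁻¹ = x ^ k := by
      intro k; rw [hx, conj_pow]
    have h1 : x ^ (m / d') ∈ Λ := by rw [← hconj]; rwa [em] at hδm
    have h2 : x ^ (d / d') ∈ Λ := by rw [← hconj]; rwa [ed] at hδ
    have h3 : x ^ Nat.gcd (d / d') (m / d') ∈ Λ := pow_gcd_mem Λ h2 h1
    have hgcd1 : Nat.gcd (d / d') (m / d') = 1 := Nat.coprime_div_gcd_div_gcd hd'pos
    rw [hgcd1, pow_one] at h3
    have hC' : rcoset Λ δ ∈ Fset Λ (partialProd γ d' hd'le) :=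
      (rcoset_mem_Fset_iff Λ).mpr h3
    have hd'mem : d' ∈ PerSet Λ γ (rcoset Λ δ) := ⟨hd'n, hd'per, hd'le, hC'⟩
    have hled' : d ≤ d' := Nat.sInf_le hd'mem
    have : d' = d := Nat.le_antisymm (Nat.le_of_dvd hdpos (Nat.gcd_dvd_left d m)) hled'
    rw [← this]
    exact Nat.gcd_dvd_right d m
  · intro hdvd
    have em : partialProd γ m hm = (partialProd γ d hdle) ^ (m / d) :=
      partialProd_pow γ hdle hm hdvd hdper
    rw [em]
    exact mem_Fset_pow Λ hdC _

lemma mem_Fset_full (Λ : Subgroup Γ) (γ : Fin n → Γ) {C : Set Γ} {m : ℕ}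
    (hmn : m ∣ n) (hper : IsPer γ m) (hm : m ≤ n)
    (hC : C ∈ Fset Λ (partialProd γ m hm)) : C ∈ Fset Λ (partialProd γ n le_rfl) := by
  rw [partialProd_pow γ hm le_rfl hmn hper]
  exact mem_Fset_pow Λ hC _

end minper


/-- If Λ₁, Λ₂ ≤ Γ are almost conjugate, then for any γ₁,…,γₙ ∈ Γ there is a
bijection ρ : F(Λ₁,γ₁⋯γₙ) → F(Λ₂,γ₁⋯γₙ) such that for every p ∣ n with
γᵢ = γⱼ whenever i ≡ j (mod n/p), a coset lies in F(Λ₁,γ₁⋯γ_{n/p}) iff its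
image lies in F(Λ₂,γ₁⋯γ_{n/p}). -/
theorem exists_compatible_bijection (Γ : Type*) [Group Γ] [Finite Γ]
    (Λ₁ Λ₂ : Subgroup Γ) (h : AlmostConj Λ₁ Λ₂) (n : ℕ) (γ : Fin n → Γ) :
    ∃ ρ : Fset Λ₁ (partialProd γ n le_rfl) → Fset Λ₂ (partialProd γ n le_rfl),
      Function.Bijective ρ ∧
      ∀ p : ℕ, p ∣ n →
        (∀ i j : Fin n, (i : ℕ) % (n / p) = (j : ℕ) % (n / p) → γ i = γ j) →
        ∀ C : Fset Λ₁ (partialProd γ n le_rfl),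
          (C : Set Γ) ∈ Fset Λ₁ (partialProd γ (n / p) (Nat.div_le_self n p)) ↔
          (ρ C : Set Γ) ∈ Fset Λ₂ (partialProd γ (n / p) (Nat.div_le_self n p)) := by
  classical
  rcases Nat.eq_zero_or_pos n with hn | hn
  · -- degenerate case n = 0
    subst hn
    have hcard := card_Fset_eq Λ₁ Λ₂ h (partialProd γ 0 le_rfl)
    obtain ⟨e⟩ := Finite.card_eq.mp hcard
    refine ⟨e, e.bijective, ?_⟩
    intro p hp hper C
    have hc : partialProd γ (0 / p) (Nat.div_le_self 0 p) = partialProd γ 0 le_rfl :=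
      partialProd_congr γ (Nat.zero_div p) _ _
    rw [hc]
    exact iff_of_true C.2 (e C).2
  · -- main case n > 0
    have hn0 : n ≠ 0 := hn.ne'
    set gN := partialProd γ n le_rfl with hgN
    set D : Finset ℕ := n.divisors.filter (fun m => IsPer γ m) with hD
    have hmemD : ∀ m, m ∈ D ↔ m ∣ n ∧ IsPer γ m := by
      intro m
      simp [hD, Nat.mem_divisors, hn0, and_assoc]
    have hDpos : ∀ m ∈ D, 0 < m := by
      intro m hm
      exact Nat.pos_of_dvd_of_pos ((hmemD m).mp hm).1 hn
    have hf₁ : ∀ C : Fset Λ₁ gN, minPer Λ₁ γ (C : Set Γ) ∈ D := by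
      intro C
      obtain ⟨h1, h2, -⟩ := minPer_mem Λ₁ γ C.2
      exact (hmemD _).mpr ⟨h1, h2⟩
    have hf₂ : ∀ C : Fset Λ₂ gN, minPer Λ₂ γ (C : Set Γ) ∈ D := by
      intro C
      obtain ⟨h1, h2, -⟩ := minPer_mem Λ₂ γ C.2
      exact (hmemD _).mpr ⟨h1, h2⟩
    -- down-set cardinalities agree
    have hdowncard : ∀ (Λ : Subgroup Γ) (e : ℕ) (he : e ∈ D),
        Nat.card {C : Fset Λ gN // minPer Λ γ (C : Set Γ) ∣ e} =
          Nat.card (Fset Λ (partialProd γ e (Nat.le_of_dvd hn ((hmemD e).mp he).1))) := by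
      intro Λ e he
      obtain ⟨hen, heper⟩ := (hmemD e).mp he
      have hele : e ≤ n := Nat.le_of_dvd hn hen
      refine Nat.card_eq_of_bijective
        (fun C => ⟨(C.1 : Set Γ),
          (minPer_key Λ γ hn C.1.2 hen heper hele).mpr C.2⟩) ⟨?_, ?_⟩
      · intro C C' hCC'
        exact Subtype.ext (Subtype.ext (by simpa using congrArg Subtype.val hCC'))
      · rintro ⟨s, hs⟩
        have hbig : s ∈ Fset Λ gN := mem_Fset_full Λ γ hen heper hele hs
        refine ⟨⟨⟨s, hbig⟩, (minPer_key Λ γ hn hbig hen heper hele).mp hs⟩, rfl⟩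
    have hdown : ∀ e ∈ D,
        Nat.card {C : Fset Λ₁ gN // (fun C : Fset Λ₁ gN => minPer Λ₁ γ (C : Set Γ)) C ∣ e} =
        Nat.card {C : Fset Λ₂ gN // (fun C : Fset Λ₂ gN => minPer Λ₂ γ (C : Set Γ)) C ∣ e} := by
      intro e he
      rw [hdowncard Λ₁ e he, hdowncard Λ₂ e he]
      exact card_Fset_eq Λ₁ Λ₂ h _
    have fibereq := fiber_card_eq (fun C : Fset Λ₁ gN => minPer Λ₁ γ (C : Set Γ))
      (fun C : Fset Λ₂ gN => minPer Λ₂ γ (C : Set Γ)) D hDpos hf₁ hf₂ hdown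
    obtain ⟨ρ, hbij, hρ⟩ := glue_bijection _ _ fibereq
    refine ⟨ρ, hbij, ?_⟩
    intro p hp hper C
    have hmn : n / p ∣ n := Nat.div_dvd_of_dvd hp
    have hper' : IsPer γ (n / p) := hper
    have hle : n / p ≤ n := Nat.div_le_self n p
    rw [minPer_key Λ₁ γ hn C.2 hmn hper' hle,
      minPer_key Λ₂ γ hn (ρ C).2 hmn hper' hle, hρ C]
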